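/- Let B ⊆ ℝ² be a finite set with |B| = m, let r, r' be natural numbers with r = 2r', r' ≥ 4, and r ≤ m, and let β ≥ 0 be a real number. For an affinely independent triple u of points of B, let b'_u = |{q ∈ B : dist(c(u), q) < ρ(u)}|, and say u is active in W if u ⊆ W and {q ∈ B : dist(c(u), q) < ρ(u)} ∩ W = ∅. Let R be a uniformly random r-element subset of B and R' a uniformly random r'-element subset of B. Then E[ number of affinely independent triples u ⊆ B with b'_u ≥ β that are active in R ] ≤ 64 · exp(−(r·β)/(2m)) · E[ number of affinely independent triples u ⊆ B active in R' ]. -/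

import Mathlib

open scoped Classical


lemma aux_count {α : Type*} [DecidableEq α] (B u F : Finset α) (s : ℕ) (hs : 3 ≤ s)
    (huB : u ⊆ B) (hu3 : u.card = 3) (hFB : F ⊆ B) (hdisj : Disjoint F u) :
    ((B.powersetCard s).filter (fun R => u ⊆ R ∧ F ∩ R = ∅)).card
      = (B.card - 3 - F.card).choose (s - 3) := by
  have hcard : (B \ (u ∪ F)).card = B.card - 3 - F.card := by
    rw [Finset.card_sdiff_of_subset (Finset.union_subset huB hFB),
      Finset.card_union_of_disjoint hdisj.symm, hu3]
    omega
  have key : ((B.powersetCard s).filter (fun R => u ⊆ R ∧ F ∩ R = ∅)).card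
      = ((B \ (u ∪ F)).powersetCard (s - 3)).card := by
    apply Finset.card_bij' (fun R _ => R \ u) (fun S _ => S ∪ u)
    · intro R hR
      simp only [Finset.mem_filter, Finset.mem_powersetCard] at hR
      obtain ⟨⟨hRB, hRs⟩, huR, hFR⟩ := hR
      rw [Finset.mem_powersetCard]
      constructor
      · intro x hx
        simp only [Finset.mem_sdiff, Finset.mem_union] at hx ⊢
        refine ⟨hRB hx.1, fun h => ?_⟩
        rcases h with h | h
        · exact hx.2 h
        · exact (Finset.eq_empty_iff_forall_notMem.mp hFR x)
            (Finset.mem_inter.mpr ⟨h, hx.1⟩)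
      · rw [Finset.card_sdiff_of_subset huR, hRs, hu3]
    · intro S hS
      rw [Finset.mem_powersetCard] at hS
      obtain ⟨hSsub, hScard⟩ := hS
      have hSu : Disjoint S u := by
        rw [Finset.disjoint_left]
        intro x hxS hxu
        have := hSsub hxS
        simp only [Finset.mem_sdiff, Finset.mem_union] at this
        exact this.2 (Or.inl hxu)
      simp only [Finset.mem_filter, Finset.mem_powersetCard]
      refine ⟨⟨Finset.union_subset (fun x hx => (Finset.mem_sdiff.mp (hSsub hx)).1) huB, ?_⟩,
        Finset.subset_union_right, ?_⟩
      · rw [Finset.card_union_of_disjoint hSu, hScard, hu3]; omega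
      · rw [Finset.eq_empty_iff_forall_notMem]
        intro x hx
        rw [Finset.mem_inter, Finset.mem_union] at hx
        obtain ⟨hxF, hxS | hxu⟩ := hx
        · have := hSsub hxS
          simp only [Finset.mem_sdiff, Finset.mem_union] at this
          exact this.2 (Or.inr hxF)
        · exact (Finset.disjoint_left.mp hdisj hxF) hxu
    · intro R hR
      simp only [Finset.mem_filter] at hR
      exact Finset.sdiff_union_of_subset hR.2.1
    · intro S hS
      rw [Finset.mem_powersetCard] at hS
      have hSu : Disjoint S u := by
        rw [Finset.disjoint_left]
        intro x hxS hxu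
        have := hS.1 hxS
        simp only [Finset.mem_sdiff, Finset.mem_union] at this
        exact this.2 (Or.inl hxu)
      rw [Finset.union_sdiff_cancel_right ?_]
      exact hSu
  rw [key, Finset.card_powersetCard, hcard]


lemma aux_ratio (m : ℝ) (hm0 : 0 < m) (N k : ℕ) (hN : (N : ℝ) ≤ m) :
    ∀ b : ℕ, k + b ≤ N →
      (((N - b).choose k : ℕ) : ℝ) ≤ (1 - k / m) ^ b * (N.choose k : ℕ) := by
  intro b
  induction b with
  | zero => intro _; simp
  | succ b ih =>
    intro h
    have h1 : k + b ≤ N := by omega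
    have hkm : (k : ℝ) ≤ m := le_trans (by exact_mod_cast Nat.le_of_add_right_le h1) hN
    have h1mk : (0 : ℝ) ≤ 1 - k / m := by
      rw [sub_nonneg, div_le_one hm0]; exact hkm
    have hNbpos : (0 : ℝ) < ((N - b : ℕ) : ℝ) := by
      have : 0 < N - b := by omega
      exact_mod_cast this
    have id1 : (N - (b + 1)).choose k * (N - b) = (N - b).choose k * (N - b - k) := by
      have e : N - (b + 1) + 1 = N - b := by omega
      have := Nat.choose_mul_succ_eq (N - (b + 1)) k
      rw [e] at this
      rw [this]
    have step : ((N - (b + 1)).choose k : ℝ) ≤ (1 - k / m) * ((N - b).choose k : ℕ) := by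
      rw [← mul_le_mul_iff_of_pos_right hNbpos]
      have cast1 : ((N - (b + 1)).choose k : ℝ) * ((N - b : ℕ) : ℝ)
          = ((N - b).choose k : ℝ) * ((N - b - k : ℕ) : ℝ) := by exact_mod_cast id1
      rw [cast1]
      have hx : ((N - b - k : ℕ) : ℝ) = ((N - b : ℕ) : ℝ) - k := by
        have : k ≤ N - b := by omega
        push_cast [Nat.cast_sub this]
        ring
      rw [hx]
      have hxm : ((N - b : ℕ) : ℝ) ≤ m := le_trans (by exact_mod_cast Nat.sub_le N b) hN
      have hdiv : (k : ℝ) * ((N - b : ℕ) : ℝ) / m ≤ k := by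
        rw [div_le_iff₀ hm0]
        exact mul_le_mul_of_nonneg_left hxm (by positivity)
      have hC : (0 : ℝ) ≤ ((N - b).choose k : ℕ) := by positivity
      have key : ((N - b : ℕ) : ℝ) - k ≤ (1 - k / m) * ((N - b : ℕ) : ℝ) := by
        have e : (1 - (k : ℝ) / m) * ((N - b : ℕ) : ℝ)
            = ((N - b : ℕ) : ℝ) - (k : ℝ) * ((N - b : ℕ) : ℝ) / m := by ring
        rw [e]; linarith
      calc ((N - b).choose k : ℝ) * (((N - b : ℕ) : ℝ) - k)
          ≤ ((N - b).choose k : ℝ) * ((1 - k / m) * ((N - b : ℕ) : ℝ)) :=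
            mul_le_mul_of_nonneg_left key hC
        _ = (1 - k / m) * ((N - b).choose k : ℝ) * ((N - b : ℕ) : ℝ) := by ring
    calc ((N - (b + 1)).choose k : ℝ)
        ≤ (1 - k / m) * ((N - b).choose k : ℕ) := step
      _ ≤ (1 - k / m) * ((1 - k / m) ^ b * (N.choose k : ℕ)) :=
          mul_le_mul_of_nonneg_left (ih h1) h1mk
      _ = (1 - k / m) ^ (b + 1) * (N.choose k : ℕ) := by ring


lemma aux_combine {a a' Q Q' g h W V D E eps : ℝ}
    (rI1 : a * g = a' * W) (rI2 : Q * h = Q' * V) (rI3 : h * D = g * E)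
    (rED : E ≤ 64 * D) (rI4 : W ≤ eps * V)
    (ha' : 0 ≤ a') (hQ0 : 0 ≤ Q) (hE0 : 0 ≤ E) (heps : 0 ≤ eps)
    (hg0 : 0 < g) (hV0 : 0 < V) (hD0 : 0 < D) :
    a * Q' ≤ 64 * eps * a' * Q := by
  have hgVD : (0 : ℝ) < g * V * D := by positivity
  have goal' : a * Q' * (g * V * D) ≤ 64 * eps * a' * Q * (g * V * D) := by
    calc a * Q' * (g * V * D) = (a * g) * (Q' * V) * D := by ring
      _ = (a' * W) * (Q * h) * D := by rw [rI1, ← rI2]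
      _ = (a' * Q) * (W * (h * D)) := by ring
      _ = (a' * Q) * (W * (g * E)) := by rw [rI3]
      _ ≤ (a' * Q) * ((eps * V) * (g * (64 * D))) := by
          apply mul_le_mul_of_nonneg_left _ (by positivity)
          apply mul_le_mul rI4
          · exact mul_le_mul_of_nonneg_left rED (le_of_lt hg0)
          · positivity
          · positivity
      _ = 64 * eps * a' * Q * (g * V * D) := by ring
  exact le_of_mul_le_mul_right goal' hgVD

lemma aux_key (m r' b : ℕ) (hr' : 4 ≤ r') (hm : 2 * r' ≤ m) :
    ((m - 3 - b).choose (2 * r' - 3) : ℝ) * (m.choose r' : ℕ) ≤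
      64 * Real.exp (-((r' : ℝ) * b) / m) * ((m - 3 - b).choose (r' - 3) : ℕ)
        * (m.choose (2 * r') : ℕ) := by
  have hm0 : (0 : ℝ) < m := by
    have : 0 < m := by omega
    exact_mod_cast this
  by_cases hbig : m < 2 * r' + b
  · have hz : m - 3 - b < 2 * r' - 3 := by omega
    rw [Nat.choose_eq_zero_of_lt hz]
    push_cast
    rw [zero_mul]
    positivity
  · push_neg at hbig
    obtain ⟨s, rfl⟩ : ∃ s, r' = s + 4 := ⟨r' - 4, by omega⟩
    set n : ℕ := m - 3 - b with hn
    -- abbreviations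
    set ε : ℝ := Real.exp (-(((s + 4 : ℕ) : ℝ) * (b : ℝ)) / m) with hε
    have hε0 : 0 < ε := Real.exp_pos _
    -- I1
    have I1 : n.choose (2 * (s + 4) - 3) * (2 * (s + 4) - 3).choose ((s + 4) - 3)
        = n.choose ((s + 4) - 3) * (n - ((s + 4) - 3)).choose ((2 * (s + 4) - 3) - ((s + 4) - 3)) :=
      Nat.choose_mul (by omega : (s + 4) - 3 ≤ 2 * (s + 4) - 3)
    have e1 : (2 * (s + 4) - 3) - ((s + 4) - 3) = s + 4 := by omega
    have e2 : n - ((s + 4) - 3) = m - b - (s + 4) := by omega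
    rw [e1, e2] at I1
    -- I2
    have I2 : m.choose (2 * (s + 4)) * (2 * (s + 4)).choose (s + 4)
        = m.choose (s + 4) * (m - (s + 4)).choose (2 * (s + 4) - (s + 4)) :=
      Nat.choose_mul (by omega : s + 4 ≤ 2 * (s + 4))
    have e3 : 2 * (s + 4) - (s + 4) = s + 4 := by omega
    rw [e3] at I2
    -- I3 : (2r').choose r' * D = (2r'-3).choose (r'-3) * E
    have I3 : (2 * (s + 4)).choose (s + 4) * ((s + 4) * (s + 3) * (s + 2))
        = (2 * (s + 4) - 3).choose ((s + 4) - 3) * ((2 * s + 8) * (2 * s + 7) * (2 * s + 6)) := by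
      have e4 : 2 * (s + 4) = 2 * s + 8 := by ring
      have e5 : 2 * (s + 4) - 3 = 2 * s + 5 := by omega
      have e6 : (s + 4) - 3 = s + 1 := by omega
      rw [e5, e6, e4]
      have h1 := Nat.add_one_mul_choose_eq (2 * s + 7) (s + 3)
      have h2 := Nat.add_one_mul_choose_eq (2 * s + 6) (s + 2)
      have h3 := Nat.add_one_mul_choose_eq (2 * s + 5) (s + 1)
      simp only [Nat.succ_eq_add_one, Nat.add_assoc] at h1 h2 h3
      -- h1 : (2s+8) * (2s+7).choose (s+3) = (2s+8).choose (s+4) * (s+4)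
      -- etc.
      calc (2 * s + 8).choose (s + 4) * ((s + 4) * (s + 3) * (s + 2))
          = ((2 * s + 8).choose (s + 4) * (s + 4)) * (s + 3) * (s + 2) := by ring
        _ = ((2 * s + 8) * (2 * s + 7).choose (s + 3)) * (s + 3) * (s + 2) := by rw [← h1]
        _ = (2 * s + 8) * ((2 * s + 7).choose (s + 3) * (s + 3)) * (s + 2) := by ring
        _ = (2 * s + 8) * ((2 * s + 7) * (2 * s + 6).choose (s + 2)) * (s + 2) := by rw [← h2]
        _ = (2 * s + 8) * (2 * s + 7) * ((2 * s + 6).choose (s + 2) * (s + 2)) := by ring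
        _ = (2 * s + 8) * (2 * s + 7) * ((2 * s + 6) * (2 * s + 5).choose (s + 1)) := by rw [← h3]
        _ = (2 * s + 5).choose (s + 1) * ((2 * s + 8) * (2 * s + 7) * (2 * s + 6)) := by ring
    -- I4
    have I4 := aux_ratio m hm0 (m - (s + 4)) (s + 4)
      (Nat.cast_le.mpr (Nat.sub_le m (s + 4))) b (by omega)
    have eds : m - (s + 4) - b = m - b - (s + 4) := by omega
    rw [eds] at I4
    have hpow : (1 - ((s + 4 : ℕ) : ℝ) / m) ^ b ≤ ε := by
      rw [hε]
      have h1 : 1 - ((s + 4 : ℕ) : ℝ) / m ≤ Real.exp (-(((s + 4 : ℕ) : ℝ)) / m) := by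
        rw [neg_div]
        linarith [Real.add_one_le_exp (-(((s + 4 : ℕ) : ℝ) / m))]
      have h0 : (0 : ℝ) ≤ 1 - ((s + 4 : ℕ) : ℝ) / m := by
        rw [sub_nonneg, div_le_one hm0]
        have : (s + 4 : ℕ) ≤ m := by omega
        exact_mod_cast this
      calc (1 - ((s + 4 : ℕ) : ℝ) / m) ^ b ≤ (Real.exp (-(((s + 4 : ℕ) : ℝ)) / m)) ^ b :=
            pow_le_pow_left₀ h0 h1 b
        _ = Real.exp ((b : ℕ) * (-(((s + 4 : ℕ) : ℝ)) / m)) := (Real.exp_nat_mul _ b).symm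
        _ = Real.exp (-(((s + 4 : ℕ) : ℝ) * b) / m) := by ring_nf
    -- now combine in ℝ
    have rI1 : ((n.choose (2 * (s + 4) - 3) : ℕ) : ℝ)
        * (((2 * (s + 4) - 3).choose ((s + 4) - 3) : ℕ) : ℝ)
        = ((n.choose ((s + 4) - 3) : ℕ) : ℝ)
        * (((m - b - (s + 4)).choose (s + 4) : ℕ) : ℝ) := by exact_mod_cast I1
    have rI2 : ((m.choose (2 * (s + 4)) : ℕ) : ℝ)
        * (((2 * (s + 4)).choose (s + 4) : ℕ) : ℝ)
        = ((m.choose (s + 4) : ℕ) : ℝ)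
        * (((m - (s + 4)).choose (s + 4) : ℕ) : ℝ) := by exact_mod_cast I2
    have rI3 : (((2 * (s + 4)).choose (s + 4) : ℕ) : ℝ)
        * ((((s + 4) * (s + 3) * (s + 2) : ℕ)) : ℝ)
        = (((2 * (s + 4) - 3).choose ((s + 4) - 3) : ℕ) : ℝ)
        * ((((2 * s + 8) * (2 * s + 7) * (2 * s + 6) : ℕ)) : ℝ) := by exact_mod_cast I3
    have rED : ((((2 * s + 8) * (2 * s + 7) * (2 * s + 6) : ℕ)) : ℝ)
        ≤ 64 * ((((s + 4) * (s + 3) * (s + 2) : ℕ)) : ℝ) := by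
      have hs0 : (0 : ℝ) ≤ (s : ℝ) := Nat.cast_nonneg s
      push_cast
      nlinarith [hs0, sq_nonneg (s : ℝ), mul_nonneg (mul_nonneg hs0 hs0) hs0]
    have rI4 : (((m - b - (s + 4)).choose (s + 4) : ℕ) : ℝ)
        ≤ ε * (((m - (s + 4)).choose (s + 4) : ℕ) : ℝ) :=
      le_trans I4 (mul_le_mul_of_nonneg_right hpow (by positivity))
    have hg0 : (0 : ℝ) < (((2 * (s + 4) - 3).choose ((s + 4) - 3) : ℕ) : ℝ) := by
      exact_mod_cast Nat.choose_pos (by omega : (s + 4) - 3 ≤ 2 * (s + 4) - 3)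
    have hV0 : (0 : ℝ) < (((m - (s + 4)).choose (s + 4) : ℕ) : ℝ) := by
      exact_mod_cast Nat.choose_pos (by omega : s + 4 ≤ m - (s + 4))
    have hD0 : (0 : ℝ) < ((((s + 4) * (s + 3) * (s + 2) : ℕ)) : ℝ) := by positivity
    have hA' : (0 : ℝ) ≤ ((n.choose ((s + 4) - 3) : ℕ) : ℝ) := Nat.cast_nonneg _
    have hQ0 : (0 : ℝ) ≤ ((m.choose (2 * (s + 4)) : ℕ) : ℝ) := Nat.cast_nonneg _
    have hE0 : (0 : ℝ) ≤ ((((2 * s + 8) * (2 * s + 7) * (2 * s + 6) : ℕ)) : ℝ) :=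
      Nat.cast_nonneg _
    exact aux_combine rI1 rI2 rI3 rED rI4 hA' hQ0 hE0 (le_of_lt hε0) hg0 hV0 hD0


lemma aux_per_u {α : Type*} [DecidableEq α] (B u Fu : Finset α) (m r r' : ℕ) (β : ℝ)
    (hB : B.card = m) (h2 : r = 2 * r') (hr' : 4 ≤ r') (hrm : r ≤ m) (hβ : 0 ≤ β)
    (huB : u ⊆ B) (hu3 : u.card = 3) (hFB : Fu ⊆ B) (hdisj : Disjoint Fu u) :
    ((((B.powersetCard r).filter
        (fun R => β ≤ (Fu.card : ℝ) ∧ u ⊆ R ∧ Fu ∩ R = ∅)).card : ℝ))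
        / ((m.choose r : ℕ) : ℝ)
      ≤ 64 * Real.exp (-((r : ℝ) * β) / (2 * (m : ℝ))) *
        ((((B.powersetCard r').filter (fun R => u ⊆ R ∧ Fu ∩ R = ∅)).card : ℝ)
          / ((m.choose r' : ℕ) : ℝ)) := by
  subst h2
  have hm8 : 8 ≤ m := by omega
  have hm0 : (0 : ℝ) < m := by exact_mod_cast show 0 < m by omega
  have hQpos : (0 : ℝ) < ((m.choose (2 * r') : ℕ) : ℝ) := by
    exact_mod_cast Nat.choose_pos hrm
  have hQ'pos : (0 : ℝ) < ((m.choose r' : ℕ) : ℝ) := by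
    exact_mod_cast Nat.choose_pos (show r' ≤ m by omega)
  by_cases hbβ : β ≤ (Fu.card : ℝ)
  · have hfe : (B.powersetCard (2 * r')).filter
        (fun R => β ≤ (Fu.card : ℝ) ∧ u ⊆ R ∧ Fu ∩ R = ∅)
        = (B.powersetCard (2 * r')).filter (fun R => u ⊆ R ∧ Fu ∩ R = ∅) := by
      ext R
      simp only [Finset.mem_filter, hbβ, true_and]
    rw [hfe]
    have hc1 : ((B.powersetCard (2 * r')).filter
        (fun R => u ⊆ R ∧ Fu ∩ R = ∅)).card = (m - 3 - Fu.card).choose (2 * r' - 3) := by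
      rw [aux_count B u Fu (2 * r') (by omega) huB hu3 hFB hdisj, hB]
    have hc2 : ((B.powersetCard r').filter
        (fun R => u ⊆ R ∧ Fu ∩ R = ∅)).card = (m - 3 - Fu.card).choose (r' - 3) := by
      rw [aux_count B u Fu r' (by omega) huB hu3 hFB hdisj, hB]
    rw [hc1, hc2, ← mul_div_assoc, div_le_div_iff₀ hQpos hQ'pos]
    have key := aux_key m r' Fu.card hr' hrm
    have hexp : Real.exp (-((r' : ℝ) * (Fu.card : ℕ)) / m)
        ≤ Real.exp (-(((2 * r' : ℕ) : ℝ) * β) / (2 * (m : ℝ))) := by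
      apply Real.exp_le_exp.mpr
      rw [neg_div, neg_div, neg_le_neg_iff]
      rw [div_le_div_iff₀ (by positivity) hm0]
      push_cast
      nlinarith [mul_nonneg (mul_nonneg (by positivity : (0:ℝ) ≤ 2 * (m:ℝ))
        (by positivity : (0:ℝ) ≤ (r' : ℝ))) (sub_nonneg.mpr hbβ)]
    calc ((m - 3 - Fu.card).choose (2 * r' - 3) : ℝ) * ((m.choose r' : ℕ) : ℝ)
        ≤ 64 * Real.exp (-((r' : ℝ) * (Fu.card : ℕ)) / m)
            * ((m - 3 - Fu.card).choose (r' - 3) : ℕ) * ((m.choose (2 * r') : ℕ) : ℝ) := key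
      _ ≤ 64 * Real.exp (-(((2 * r' : ℕ) : ℝ) * β) / (2 * (m : ℝ)))
            * ((m - 3 - Fu.card).choose (r' - 3) : ℕ) * ((m.choose (2 * r') : ℕ) : ℝ) := by
          gcongr
  · have hfe : (B.powersetCard (2 * r')).filter
        (fun R => β ≤ (Fu.card : ℝ) ∧ u ⊆ R ∧ Fu ∩ R = ∅) = ∅ :=
      Finset.filter_eq_empty_iff.mpr (fun _ _ h => hbβ h.1)
    rw [hfe]
    simp only [Finset.card_empty, Nat.cast_zero, zero_div]
    positivity


lemma aux_swap {α : Type*} [DecidableEq α] (B : Finset α) (s : ℕ)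
    (P : Finset α → Prop) (C : Finset α → Finset α → Prop)
    [DecidablePred P] [∀ R, DecidablePred (fun u => P u ∧ C u R)]
    [∀ u, DecidablePred (C u)] :
    ∑ R ∈ B.powersetCard s, ((B.powersetCard 3).filter (fun u => P u ∧ C u R)).card
      = ∑ u ∈ (B.powersetCard 3).filter P,
          ((B.powersetCard s).filter (fun R => C u R)).card := by
  simp only [Finset.card_filter]
  rw [Finset.sum_comm, Finset.sum_filter]
  apply Finset.sum_congr rfl
  intro u _
  by_cases hP : P u
  · simp [hP]
  · simp [hP]

/-- Lemma 8 of the paper. The expected number of affinely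
independent triples `u ⊆ B` with conflict size `b'_u ≥ β` that are active in a
uniformly random `r`-subset `R` of `B` is at most `64 e^{-rβ/(2m)}` times the
expected number of active triples for a uniformly random `r'`-subset `R'`,
where `r = 2r'`. Here `c u` and `ρ u` denote the circumcenter and circumradius
of the triple `u`, and expectations are expressed as averages over
`B.powersetCard r` (resp. `B.powersetCard r'`). -/
theorem expected_heavy_active_triples_bound
    (B : Finset (EuclideanSpace ℝ (Fin 2))) (m r r' : ℕ) (β : ℝ)
    (hB : B.card = m) (h2 : r = 2 * r') (hr' : 4 ≤ r') (hrm : r ≤ m) (hβ : 0 ≤ β)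
    (c : Finset (EuclideanSpace ℝ (Fin 2)) → EuclideanSpace ℝ (Fin 2))
    (ρ : Finset (EuclideanSpace ℝ (Fin 2)) → ℝ)
    (hc : ∀ u ∈ B.powersetCard 3,
      AffineIndependent ℝ (fun x : u => (x : EuclideanSpace ℝ (Fin 2))) →
      ∀ q ∈ u, dist (c u) q = ρ u) :
    (∑ R ∈ B.powersetCard r,
        (((B.powersetCard 3).filter (fun (u : Finset (EuclideanSpace ℝ (Fin 2))) =>
            AffineIndependent ℝ (fun x : u => (x : EuclideanSpace ℝ (Fin 2))) ∧
            β ≤ ((B.filter (fun q => dist (c u) q < ρ u)).card : ℝ) ∧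
            u ⊆ R ∧
            (B.filter (fun q => dist (c u) q < ρ u)) ∩ R = ∅)).card : ℝ)) /
      ((B.powersetCard r).card : ℝ)
    ≤ 64 * Real.exp (-((r : ℝ) * β) / (2 * (m : ℝ))) *
      ((∑ R' ∈ B.powersetCard r',
          (((B.powersetCard 3).filter (fun (u : Finset (EuclideanSpace ℝ (Fin 2))) =>
            AffineIndependent ℝ (fun x : u => (x : EuclideanSpace ℝ (Fin 2))) ∧
            u ⊆ R' ∧
            (B.filter (fun q => dist (c u) q < ρ u)) ∩ R' = ∅)).card : ℝ)) /
        ((B.powersetCard r').card : ℝ)) := by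
  have e1 := aux_swap B r
    (fun (u : Finset (EuclideanSpace ℝ (Fin 2))) =>
      AffineIndependent ℝ (fun x : u => (x : EuclideanSpace ℝ (Fin 2))))
    (fun u R => β ≤ ((B.filter (fun q => dist (c u) q < ρ u)).card : ℝ) ∧
      u ⊆ R ∧ (B.filter (fun q => dist (c u) q < ρ u)) ∩ R = ∅)
  have e2 := aux_swap B r'
    (fun (u : Finset (EuclideanSpace ℝ (Fin 2))) =>
      AffineIndependent ℝ (fun x : u => (x : EuclideanSpace ℝ (Fin 2))))
    (fun u R => u ⊆ R ∧ (B.filter (fun q => dist (c u) q < ρ u)) ∩ R = ∅)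
  have cast1 : (∑ R ∈ B.powersetCard r,
        (((B.powersetCard 3).filter (fun (u : Finset (EuclideanSpace ℝ (Fin 2))) =>
            AffineIndependent ℝ (fun x : u => (x : EuclideanSpace ℝ (Fin 2))) ∧
            β ≤ ((B.filter (fun q => dist (c u) q < ρ u)).card : ℝ) ∧
            u ⊆ R ∧
            (B.filter (fun q => dist (c u) q < ρ u)) ∩ R = ∅)).card : ℝ))
      = ∑ u ∈ (B.powersetCard 3).filter
          (fun (u : Finset (EuclideanSpace ℝ (Fin 2))) =>
            AffineIndependent ℝ (fun x : u => (x : EuclideanSpace ℝ (Fin 2)))),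
          ((((B.powersetCard r).filter (fun R =>
            β ≤ ((B.filter (fun q => dist (c u) q < ρ u)).card : ℝ) ∧
            u ⊆ R ∧ (B.filter (fun q => dist (c u) q < ρ u)) ∩ R = ∅)).card : ℕ) : ℝ) := by
    exact_mod_cast e1
  have cast2 : (∑ R' ∈ B.powersetCard r',
        (((B.powersetCard 3).filter (fun (u : Finset (EuclideanSpace ℝ (Fin 2))) =>
            AffineIndependent ℝ (fun x : u => (x : EuclideanSpace ℝ (Fin 2))) ∧
            u ⊆ R' ∧
            (B.filter (fun q => dist (c u) q < ρ u)) ∩ R' = ∅)).card : ℝ))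
      = ∑ u ∈ (B.powersetCard 3).filter
          (fun (u : Finset (EuclideanSpace ℝ (Fin 2))) =>
            AffineIndependent ℝ (fun x : u => (x : EuclideanSpace ℝ (Fin 2)))),
          ((((B.powersetCard r').filter (fun R =>
            u ⊆ R ∧ (B.filter (fun q => dist (c u) q < ρ u)) ∩ R = ∅)).card : ℕ) : ℝ) := by
    exact_mod_cast e2
  rw [cast1, cast2, Finset.card_powersetCard, Finset.card_powersetCard, hB,
    Finset.sum_div, Finset.sum_div, Finset.mul_sum]
  apply Finset.sum_le_sum
  intro u hu
  rw [Finset.mem_filter] at hu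
  obtain ⟨hu3, hA⟩ := hu
  rw [Finset.mem_powersetCard] at hu3
  obtain ⟨huB, hcard⟩ := hu3
  have hdisj : Disjoint (B.filter (fun q => dist (c u) q < ρ u)) u := by
    rw [Finset.disjoint_left]
    intro x hx hxu
    rw [Finset.mem_filter] at hx
    have := hc u (by rw [Finset.mem_powersetCard]; exact ⟨huB, hcard⟩) hA x hxu
    linarith [hx.2]
  exact aux_per_u B u (B.filter (fun q => dist (c u) q < ρ u)) m r r' β hB h2 hr' hrm hβ
    huB hcard (Finset.filter_subset _ _) hdisj
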